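/- Suppose {P₁,P₂} is a positive definite bimatrix solution of the bimatrix Riccati equation −{Q,0} = {A₁,A₂}^H{P₁,P₂}{A₁,A₂} − {P₁,P₂} − {A₁,A₂}^H{P₁,P₂}{B₁,B₂}{S₁,S₂}^{-1}{B₁,B₂}^H{P₁,P₂}{A₁,A₂}, where {S₁,S₂} = {R,0} + {B₁,B₂}^H{P₁,P₂}{B₁,B₂} is invertible, and define the feedback gain bimatrix {K₁*,K₂*} = −{S₁,S₂}^{-1}{B₁,B₂}^H{P₁,P₂}{A₁,A₂}. Then: (i) every solution of the closed-loop system x(k+1) = ({A₁,A₂} + {B₁,B₂}{K₁*,K₂*})x(k) converges to 0; (ii) for every initial condition x₀ and every control sequence u, J(u) ≥ Re(x₀^H P₁ x₀ + x₀^H P₂^# x₀^#), and the feedback control u*(k) = K₁* x(k) + (K₂*)^# x^#(k) achieves J(u*) = Re(x₀^H P₁ x₀ + x₀^H P₂^# x₀^#). -/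

import Mathlib

open Matrix Filter Topology
open scoped ENNReal ComplexOrder

noncomputable section

/-- Entrywise complex conjugate of a matrix, `M^#`. -/
def mconj {k l : Type*} (A : Matrix k l ℂ) : Matrix k l ℂ := A.map (starRingEnd ℂ)

/-- A bimatrix `{A₁, A₂}` of `k × l` complex matrices. -/
structure Bimatrix (k l : ℕ) where
  fst : Matrix (Fin k) (Fin l) ℂ
  snd : Matrix (Fin k) (Fin l) ℂ

namespace Bimatrix

variable {k l p : ℕ}

/-- The action of a bimatrix on a vector: `{A₁,A₂}x = A₁x + A₂^# x^#`. -/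
def apply (A : Bimatrix k l) (x : Fin l → ℂ) : Fin k → ℂ :=
  A.fst *ᵥ x + mconj A.snd *ᵥ star x

/-- Bimatrix product `{A₁,A₂}{B₁,B₂} = {A₁B₁ + A₂^#B₂, A₁^#B₂ + A₂B₁}`. -/
def mul (A : Bimatrix k l) (B : Bimatrix l p) : Bimatrix k p :=
  ⟨A.fst * B.fst + mconj A.snd * B.snd, mconj A.fst * B.snd + A.snd * B.fst⟩

/-- Bimatrix conjugate transpose `{A₁,A₂}^H = {A₁^H, A₂^T}`. -/
def conjT (A : Bimatrix k l) : Bimatrix l k :=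
  ⟨A.fst.conjTranspose, A.snd.transpose⟩

def add (A B : Bimatrix k l) : Bimatrix k l := ⟨A.fst + B.fst, A.snd + B.snd⟩

def sub (A B : Bimatrix k l) : Bimatrix k l := ⟨A.fst - B.fst, A.snd - B.snd⟩

def neg (A : Bimatrix k l) : Bimatrix k l := ⟨-A.fst, -A.snd⟩

/-- The identity bimatrix `{I, 0}`. -/
def one (k : ℕ) : Bimatrix k k := ⟨1, 0⟩

/-- A bimatrix is Hermitian if `P₁^H = P₁` and `P₂^T = P₂`. -/
def IsHermitian (P : Bimatrix k k) : Prop :=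
  P.fst.conjTranspose = P.fst ∧ P.snd.transpose = P.snd

/-- The real quadratic form `Re (x^H P₁ x + x^H P₂^# x^#)` of a bimatrix. -/
def quadForm (P : Bimatrix k k) (x : Fin k → ℂ) : ℝ :=
  (star x ⬝ᵥ P.apply x).re

/-- Positive semidefinite bimatrix. -/
def PosSemidef (P : Bimatrix k k) : Prop :=
  P.IsHermitian ∧ ∀ x : Fin k → ℂ, 0 ≤ P.quadForm x

/-- Positive definite bimatrix. -/
def PosDef (P : Bimatrix k k) : Prop :=
  P.IsHermitian ∧ (∀ x : Fin k → ℂ, 0 ≤ P.quadForm x) ∧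
    ∀ x : Fin k → ℂ, x ≠ 0 → 0 < P.quadForm x

/-- The Loewner-type order on bimatrices: `X ≤ Y` iff `Y - X ≥ 0`. -/
def le (X Y : Bimatrix k k) : Prop := PosSemidef (Y.sub X)

/-- `T` is the (two-sided) inverse of the bimatrix `S`. -/
def IsInv (S T : Bimatrix k k) : Prop := S.mul T = one k ∧ T.mul S = one k

/-- The complex-matrix representation of a bimatrix. -/
def toMat (S : Bimatrix k k) : Matrix (Fin k ⊕ Fin k) (Fin k ⊕ Fin k) ℂ :=
  fromBlocks S.fst (mconj S.snd) S.snd (mconj S.fst)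

/-- The inverse of a bimatrix, extracted from the inverse of its complex-matrix
representation.  When `S` is invertible as a bimatrix, `S.inv` is its genuine inverse. -/
def inv (S : Bimatrix k k) : Bimatrix k k :=
  ⟨(toMat S)⁻¹.toBlocks₁₁, (toMat S)⁻¹.toBlocks₂₁⟩

end Bimatrix

variable {n m : ℕ}

/-- The complex-valued linear system `x(k+1) = {A₁,A₂}x(k) + {B₁,B₂}u(k)` is
stabilizable if some full state feedback `u(k) = K₁x(k) + K₂^#x^#(k)` drives every
closed-loop solution to zero. -/
def Stabilizable (A : Bimatrix n n) (B : Bimatrix n m) : Prop :=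
  ∃ K : Bimatrix m n, ∀ x : ℕ → (Fin n → ℂ),
    (∀ k : ℕ, x (k + 1) = A.apply (x k) + B.apply (K.apply (x k))) →
    Tendsto x atTop (𝓝 0)

/-- `{S₁,S₂} = {R,0} + {B₁,B₂}^H {P₁,P₂} {B₁,B₂}`. -/
def Smat (B : Bimatrix n m) (R : Matrix (Fin m) (Fin m) ℂ) (P : Bimatrix n n) :
    Bimatrix m m :=
  (Bimatrix.mk R 0).add (B.conjT.mul (P.mul B))

/-- The bimatrix Riccati equation
`-{Q,0} = {A}^H{P}{A} - {P} - {A}^H{P}{B}{S}⁻¹{B}^H{P}{A}`, where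
`{S} = {R,0} + {B}^H{P}{B}` is required to be invertible. -/
def RiccatiEq (A : Bimatrix n n) (B : Bimatrix n m)
    (Q : Matrix (Fin n) (Fin n) ℂ) (R : Matrix (Fin m) (Fin m) ℂ)
    (P : Bimatrix n n) : Prop :=
  ∃ T : Bimatrix m m, (Smat B R P).IsInv T ∧
    (Bimatrix.mk Q 0).neg =
      ((A.conjT.mul (P.mul A)).sub P).sub
        (A.conjT.mul (P.mul (B.mul (T.mul (B.conjT.mul (P.mul A))))))

/-- The trajectory of `x(k+1) = {A₁,A₂}x(k) + {B₁,B₂}u(k)` from `x₀` under `u`. -/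
def traj (A : Bimatrix n n) (B : Bimatrix n m) (x₀ : Fin n → ℂ)
    (u : ℕ → Fin m → ℂ) : ℕ → Fin n → ℂ
  | 0 => x₀
  | k + 1 => A.apply (traj A B x₀ u k) + B.apply (u k)

/-- The quadratic cost `J = Σ_k (x(k)^H Q x(k) + u(k)^H R u(k))`, valued in `[0,∞]`. -/
def cost (Q : Matrix (Fin n) (Fin n) ℂ) (R : Matrix (Fin m) (Fin m) ℂ)
    (x : ℕ → Fin n → ℂ) (u : ℕ → Fin m → ℂ) : ℝ≥0∞ :=
  ∑' k : ℕ, ENNReal.ofReal ((star (x k) ⬝ᵥ (Q *ᵥ x k)).re + (star (u k) ⬝ᵥ (R *ᵥ u k)).re)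

section Aux

@[simp] lemma mconj_mconj {k l : Type*} (A : Matrix k l ℂ) : mconj (mconj A) = A := by
  ext i j; simp [mconj]

lemma mconj_mul {k l p : Type*} [Fintype l] (A : Matrix k l ℂ) (B : Matrix l p ℂ) :
    mconj (A * B) = mconj A * mconj B := by
  ext i j; simp [mconj, Matrix.mul_apply, map_sum]

lemma mconj_add {k l : Type*} (A B : Matrix k l ℂ) : mconj (A + B) = mconj A + mconj B := by
  ext i j; simp [mconj]

lemma mconj_neg {k l : Type*} (A : Matrix k l ℂ) : mconj (-A) = -mconj A := by
  ext i j; simp [mconj]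

@[simp] lemma mconj_zero {k l : Type*} : mconj (0 : Matrix k l ℂ) = 0 := by
  ext i j; simp [mconj]

@[simp] lemma mconj_one {k : Type*} [DecidableEq k] : mconj (1 : Matrix k k ℂ) = 1 := by
  ext i j; simp [mconj, Matrix.one_apply, apply_ite]

lemma mconj_conjT {k l : Type*} (A : Matrix k l ℂ) : mconj Aᴴ = Aᵀ := by
  ext i j; simp [mconj]

lemma mconj_transpose {k l : Type*} (A : Matrix k l ℂ) : mconj Aᵀ = Aᴴ := by
  ext i j; simp [mconj]

lemma conjT_mconj {k l : Type*} (A : Matrix k l ℂ) : (mconj A)ᴴ = Aᵀ := by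
  ext i j; simp [mconj]

lemma transpose_mconj {k l : Type*} (A : Matrix k l ℂ) : (mconj A)ᵀ = Aᴴ := by
  ext i j; simp [mconj]

lemma star_mulVec' {a b : ℕ} (M : Matrix (Fin a) (Fin b) ℂ) (v : Fin b → ℂ) :
    star (M *ᵥ v) = mconj M *ᵥ star v := by
  ext i
  simp [Matrix.mulVec, dotProduct, mconj, star_sum, map_sum]

namespace Bimatrix
variable {a b c d : ℕ}

lemma ext' {A B : Bimatrix a b} (h1 : A.fst = B.fst) (h2 : A.snd = B.snd) : A = B := by
  cases A; cases B; simp_all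

lemma mul_assoc' (A : Bimatrix a b) (B : Bimatrix b c) (C : Bimatrix c d) :
    (A.mul B).mul C = A.mul (B.mul C) := by
  apply ext' <;>
    simp only [mul, mconj_add, mconj_mul, mconj_mconj, Matrix.add_mul, Matrix.mul_add,
      Matrix.mul_assoc] <;> abel

lemma mul_one' (A : Bimatrix a b) : A.mul (one b) = A := by
  apply ext' <;> simp [mul, one]

lemma one_mul' (A : Bimatrix a b) : (one a).mul A = A := by
  apply ext' <;> simp [mul, one]

lemma conjT_mul (A : Bimatrix a b) (B : Bimatrix b c) :
    (A.mul B).conjT = B.conjT.mul A.conjT := by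
  apply ext' <;>
    simp only [mul, conjT, Matrix.conjTranspose_add, Matrix.conjTranspose_mul,
      Matrix.transpose_add, Matrix.transpose_mul, mconj_conjT, mconj_transpose,
      conjT_mconj, transpose_mconj, mconj_mul, mconj_mconj] <;> abel

@[simp] lemma conjT_conjT (A : Bimatrix a b) : A.conjT.conjT = A := by
  apply ext' <;> simp [conjT, mconj_conjT, mconj_transpose]

lemma conjT_neg (A : Bimatrix a b) : A.neg.conjT = A.conjT.neg := by
  apply ext' <;> simp [conjT, neg]

lemma neg_neg' (A : Bimatrix a b) : A.neg.neg = A := by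
  apply ext' <;> simp [neg]

lemma neg_mul' (A : Bimatrix a b) (B : Bimatrix b c) : A.neg.mul B = (A.mul B).neg := by
  apply ext' <;> simp [mul, neg, mconj_neg, Matrix.neg_mul, Matrix.mul_neg] <;> abel

lemma mul_neg' (A : Bimatrix a b) (B : Bimatrix b c) : A.mul B.neg = (A.mul B).neg := by
  apply ext' <;> simp [mul, neg, mconj_neg, Matrix.neg_mul, Matrix.mul_neg] <;> abel

lemma IsHermitian.conjT_eq {P : Bimatrix a a} (h : P.IsHermitian) : P.conjT = P :=
  ext' h.1 h.2

lemma apply_vadd (A : Bimatrix a b) (x y : Fin b → ℂ) :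
    A.apply (x + y) = A.apply x + A.apply y := by
  simp only [apply, star_add, Matrix.mulVec_add]; abel

lemma apply_vneg (A : Bimatrix a b) (x : Fin b → ℂ) : A.apply (-x) = -A.apply x := by
  simp only [apply, star_neg, Matrix.mulVec_neg]; abel

@[simp] lemma apply_vzero (A : Bimatrix a b) : A.apply 0 = 0 := by
  simp [apply]

lemma mul_apply' (A : Bimatrix a b) (B : Bimatrix b c) (x : Fin c → ℂ) :
    (A.mul B).apply x = A.apply (B.apply x) := by
  simp only [apply, mul, star_add, star_mulVec', mconj_mconj, mconj_add, mconj_mul,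
    Matrix.mulVec_add, Matrix.add_mulVec, Matrix.mulVec_mulVec, star_star]
  abel

lemma add_apply' (A B : Bimatrix a b) (x : Fin b → ℂ) :
    (A.add B).apply x = A.apply x + B.apply x := by
  simp only [apply, add, mconj_add, Matrix.add_mulVec]; abel

lemma sub_apply' (A B : Bimatrix a b) (x : Fin b → ℂ) :
    (A.sub B).apply x = A.apply x - B.apply x := by
  have : A.sub B = A.add B.neg := by apply ext' <;> simp [sub, add, neg, sub_eq_add_neg]
  rw [this, add_apply']
  have : B.neg.apply x = -B.apply x := by
    simp only [apply, neg, mconj_neg, Matrix.neg_mulVec]; abel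
  rw [this]; abel

lemma neg_apply' (A : Bimatrix a b) (x : Fin b → ℂ) : A.neg.apply x = -A.apply x := by
  simp only [apply, neg, mconj_neg, Matrix.neg_mulVec]; abel

end Bimatrix

section Quad
variable {a b c : ℕ}

lemma star_dot (v w : Fin a → ℂ) : star (v ⬝ᵥ w) = star v ⬝ᵥ star w := by
  simp [dotProduct, star_sum]

lemma transpose_conjT_eq_mconj {k l : Type*} (A : Matrix k l ℂ) : Aᴴᵀ = mconj A := by
  ext i j; simp [mconj]

lemma conjT_dot_re (M : Bimatrix a b) (x : Fin b → ℂ) (y : Fin a → ℂ) :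
    (star x ⬝ᵥ M.conjT.apply y).re = (star (M.apply x) ⬝ᵥ y).re := by
  have e1 : star x ⬝ᵥ (M.fstᴴ *ᵥ y) = (mconj M.fst *ᵥ star x) ⬝ᵥ y := by
    rw [Matrix.dotProduct_mulVec, ← Matrix.mulVec_transpose, transpose_conjT_eq_mconj]
  have e2 : star x ⬝ᵥ (M.sndᴴ *ᵥ star y) = star ((M.snd *ᵥ x) ⬝ᵥ y) := by
    rw [Matrix.dotProduct_mulVec, ← Matrix.mulVec_transpose, transpose_conjT_eq_mconj,
      star_dot, star_mulVec']
  simp only [Bimatrix.apply, Bimatrix.conjT, mconj_transpose, star_add, star_mulVec',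
    mconj_mconj, star_star, dotProduct_add, add_dotProduct, e1, e2,
    Complex.add_re]
  have : (star ((M.snd *ᵥ x) ⬝ᵥ y)).re = ((M.snd *ᵥ x) ⬝ᵥ y).re := Complex.conj_re _
  rw [this]

lemma cross_re (M : Bimatrix a b) (H : Bimatrix a c) (x : Fin b → ℂ) (u : Fin c → ℂ) :
    (star x ⬝ᵥ (M.conjT.mul H).apply u).re = (star (M.apply x) ⬝ᵥ H.apply u).re := by
  rw [Bimatrix.mul_apply', conjT_dot_re]

lemma quadForm_conj_mul (M : Bimatrix a b) (P : Bimatrix a a) (x : Fin b → ℂ) :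
    (M.conjT.mul (P.mul M)).quadForm x = P.quadForm (M.apply x) := by
  rw [Bimatrix.quadForm, Bimatrix.mul_apply', conjT_dot_re, Bimatrix.mul_apply',
    Bimatrix.quadForm]

lemma quadForm_add' (P P' : Bimatrix a a) (x : Fin a → ℂ) :
    (P.add P').quadForm x = P.quadForm x + P'.quadForm x := by
  simp [Bimatrix.quadForm, Bimatrix.add_apply', dotProduct_add]

lemma quadForm_sub' (P P' : Bimatrix a a) (x : Fin a → ℂ) :
    (P.sub P').quadForm x = P.quadForm x - P'.quadForm x := by
  simp [Bimatrix.quadForm, Bimatrix.sub_apply', dotProduct_sub]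

lemma quadForm_neg' (P : Bimatrix a a) (x : Fin a → ℂ) :
    P.neg.quadForm x = -P.quadForm x := by
  simp [Bimatrix.quadForm, Bimatrix.neg_apply']

lemma quadForm_mk (Q : Matrix (Fin a) (Fin a) ℂ) (x : Fin a → ℂ) :
    (Bimatrix.mk Q 0).quadForm x = (star x ⬝ᵥ Q *ᵥ x).re := by
  simp [Bimatrix.quadForm, Bimatrix.apply]

@[simp] lemma quadForm_vzero (P : Bimatrix a a) : P.quadForm 0 = 0 := by
  simp [Bimatrix.quadForm]

lemma herm_symm_re {P : Bimatrix a a} (hP : P.IsHermitian) (x y : Fin a → ℂ) :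
    (star x ⬝ᵥ P.apply y).re = (star y ⬝ᵥ P.apply x).re := by
  conv_lhs => rw [← hP.conjT_eq]
  rw [conjT_dot_re]
  have : (star (P.apply x)) ⬝ᵥ y = star (star y ⬝ᵥ P.apply x) := by
    rw [star_dot, star_star, dotProduct_comm]
  rw [this]
  exact Complex.conj_re _

lemma quadForm_vadd {P : Bimatrix a a} (hP : P.IsHermitian) (y z : Fin a → ℂ) :
    P.quadForm (y + z)
      = P.quadForm y + P.quadForm z + 2 * (star y ⬝ᵥ P.apply z).re := by
  have hsymm := herm_symm_re hP z y
  simp only [Bimatrix.quadForm, Bimatrix.apply_vadd, star_add, add_dotProduct,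
    dotProduct_add, Complex.add_re]
  linarith

lemma quadForm_smul (P : Bimatrix a a) (c : ℝ) (x : Fin a → ℂ) :
    P.quadForm ((c : ℂ) • x) = c ^ 2 * P.quadForm x := by
  have hstar : star ((c : ℂ) • x) = (c : ℂ) • star x := by
    ext i; simp [Complex.ext_iff]
  have happ : P.apply ((c : ℂ) • x) = (c : ℂ) • P.apply x := by
    simp [Bimatrix.apply, hstar, Matrix.mulVec_smul, smul_add]
  rw [Bimatrix.quadForm, hstar, happ, smul_dotProduct, dotProduct_smul,
    smul_smul, smul_eq_mul, ← Complex.ofReal_mul, Complex.re_ofReal_mul,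
    Bimatrix.quadForm]
  ring

lemma quadForm_vneg (P : Bimatrix a a) (y : Fin a → ℂ) : P.quadForm (-y) = P.quadForm y := by
  have h := quadForm_smul P (-1) y
  simpa using h

lemma continuous_bapply (A : Bimatrix a b) : Continuous fun x : Fin b → ℂ => A.apply x := by
  unfold Bimatrix.apply
  exact ((continuous_const.matrix_mulVec continuous_id).add
    (continuous_const.matrix_mulVec continuous_star))

lemma continuous_quadForm (P : Bimatrix a a) :
    Continuous fun x : Fin a → ℂ => P.quadForm x := by
  unfold Bimatrix.quadForm
  exact Complex.continuous_re.comp (continuous_star.dotProduct (continuous_bapply P))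

end Quad

section Key
open Bimatrix

lemma conjT_add' {a b : ℕ} (A B : Bimatrix a b) : (A.add B).conjT = A.conjT.add B.conjT := by
  apply Bimatrix.ext' <;> simp [Bimatrix.conjT, Bimatrix.add]

lemma conjT_one {a : ℕ} : (Bimatrix.one a).conjT = Bimatrix.one a := by
  apply Bimatrix.ext' <;> simp [Bimatrix.conjT, Bimatrix.one]

lemma hermOfConjT {a : ℕ} {P : Bimatrix a a} (h : P.conjT = P) : P.IsHermitian :=
  ⟨congrArg Bimatrix.fst h, congrArg Bimatrix.snd h⟩

variable {n m : ℕ}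

lemma Smat_conjT (B : Bimatrix n m) (R : Matrix (Fin m) (Fin m) ℂ) (hR : Rᴴ = R)
    (P : Bimatrix n n) (hP : P.conjT = P) : (Smat B R P).conjT = Smat B R P := by
  unfold Smat
  rw [conjT_add', conjT_mul, conjT_mul, conjT_conjT, hP, ← mul_assoc']
  congr 1
  · apply Bimatrix.ext' <;> simp [Bimatrix.conjT, hR]

lemma inv_conjT {a : ℕ} {S T : Bimatrix a a} (hS : S.conjT = S) (hT : S.IsInv T) :
    T.conjT = T := by
  have h1 : T.conjT.mul S = Bimatrix.one a := by
    have := congrArg Bimatrix.conjT hT.1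
    rwa [conjT_mul, hS, conjT_one] at this
  calc T.conjT = T.conjT.mul (S.mul T) := by rw [hT.1, mul_one']
    _ = (T.conjT.mul S).mul T := by rw [mul_assoc']
    _ = T := by rw [h1, one_mul']

lemma key_identity
    (A : Bimatrix n n) (B : Bimatrix n m)
    (Q : Matrix (Fin n) (Fin n) ℂ) (R : Matrix (Fin m) (Fin m) ℂ)
    (hR : Rᴴ = R)
    (P : Bimatrix n n) (hP : P.IsHermitian)
    (T : Bimatrix m m) (hT : (Smat B R P).IsInv T)
    (heq : (Bimatrix.mk Q 0).neg =
      ((A.conjT.mul (P.mul A)).sub P).sub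
        (A.conjT.mul (P.mul (B.mul (T.mul (B.conjT.mul (P.mul A)))))))
    (K : Bimatrix m n) (hK : K = (T.mul (B.conjT.mul (P.mul A))).neg)
    (x : Fin n → ℂ) (u : Fin m → ℂ) :
    P.quadForm (A.apply x + B.apply u)
      + ((star x ⬝ᵥ Q *ᵥ x).re + (star u ⬝ᵥ R *ᵥ u).re)
    = P.quadForm x + (Smat B R P).quadForm (u - K.apply x) := by
  set S := Smat B R P with hS_def
  have hPc : P.conjT = P := hP.conjT_eq
  have hSc : S.conjT = S := Smat_conjT B R hR P hPc
  have hSh : S.IsHermitian := hermOfConjT hSc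
  have hTc : T.conjT = T := inv_conjT hSc hT
  set G := A.conjT.mul (P.mul B) with hG_def
  set Z := A.conjT.mul (P.mul (B.mul (T.mul (B.conjT.mul (P.mul A))))) with hZ_def
  -- (a) K^H S = -G
  have hKc : K.conjT = (G.mul T).neg := by
    rw [hK, conjT_neg, conjT_mul, conjT_mul, conjT_mul, conjT_conjT, hPc,
      hTc, mul_assoc' A.conjT P B]
  have ha : K.conjT.mul S = G.neg := by
    rw [hKc, neg_mul', mul_assoc', hT.2, mul_one']
  -- (b) K^H (S K) = Z
  have hb : K.conjT.mul (S.mul K) = Z := by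
    rw [← mul_assoc', ha, neg_mul', hK, mul_neg', neg_neg', hZ_def, hG_def,
      mul_assoc', mul_assoc']
  have hc : -((star x ⬝ᵥ Q *ᵥ x).re)
      = (A.conjT.mul (P.mul A)).quadForm x - P.quadForm x - Z.quadForm x := by
    have h := congrArg (fun M => Bimatrix.quadForm M x) heq
    simpa [quadForm_sub', quadForm_neg', quadForm_mk] using h
  have e1 : P.quadForm (A.apply x + B.apply u)
      = P.quadForm (A.apply x) + P.quadForm (B.apply u)
        + 2 * (star (A.apply x) ⬝ᵥ P.apply (B.apply u)).re := quadForm_vadd hP _ _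
  have e2 : (A.conjT.mul (P.mul A)).quadForm x = P.quadForm (A.apply x) :=
    quadForm_conj_mul A P x
  have e3 : (B.conjT.mul (P.mul B)).quadForm u = P.quadForm (B.apply u) :=
    quadForm_conj_mul B P u
  have e4 : (star x ⬝ᵥ G.apply u).re = (star (A.apply x) ⬝ᵥ P.apply (B.apply u)).re := by
    rw [hG_def, cross_re, Bimatrix.mul_apply']
  have f2 : S.quadForm (u - K.apply x)
      = S.quadForm u + S.quadForm (K.apply x)
        + 2 * (star u ⬝ᵥ S.apply (-(K.apply x))).re := by
    rw [sub_eq_add_neg, quadForm_vadd hSh, quadForm_vneg]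
  have f3 : (star u ⬝ᵥ S.apply (-(K.apply x))).re = -(star u ⬝ᵥ S.apply (K.apply x)).re := by
    rw [Bimatrix.apply_vneg]; simp
  have f4 : (star u ⬝ᵥ S.apply (K.apply x)).re = (star (K.apply x) ⬝ᵥ S.apply u).re :=
    herm_symm_re hSh u (K.apply x)
  have f5 : (star (K.apply x) ⬝ᵥ S.apply u).re = -(star x ⬝ᵥ G.apply u).re := by
    rw [← cross_re K S x u, ha, Bimatrix.neg_apply']; simp
  have f7 : S.quadForm (K.apply x) = Z.quadForm x := by
    rw [← quadForm_conj_mul K S x, hb]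
  have f8 : S.quadForm u
      = (star u ⬝ᵥ R *ᵥ u).re + (B.conjT.mul (P.mul B)).quadForm u := by
    rw [hS_def]; unfold Smat; rw [quadForm_add', quadForm_mk]
  linarith

lemma traj_telescope {n m : ℕ}
    (A : Bimatrix n n) (B : Bimatrix n m)
    (Q : Matrix (Fin n) (Fin n) ℂ) (R : Matrix (Fin m) (Fin m) ℂ)
    (hR : Rᴴ = R)
    (P : Bimatrix n n) (hP : P.IsHermitian)
    (T : Bimatrix m m) (hT : (Smat B R P).IsInv T)
    (heq : (Bimatrix.mk Q 0).neg =
      ((A.conjT.mul (P.mul A)).sub P).sub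
        (A.conjT.mul (P.mul (B.mul (T.mul (B.conjT.mul (P.mul A)))))))
    (K : Bimatrix m n) (hK : K = (T.mul (B.conjT.mul (P.mul A))).neg)
    (x₀ : Fin n → ℂ) (u : ℕ → Fin m → ℂ) (N : ℕ) :
    ∑ k ∈ Finset.range N,
        ((star (traj A B x₀ u k) ⬝ᵥ Q *ᵥ traj A B x₀ u k).re
          + (star (u k) ⬝ᵥ R *ᵥ u k).re)
      = P.quadForm x₀ - P.quadForm (traj A B x₀ u N)
        + ∑ k ∈ Finset.range N,
            (Smat B R P).quadForm (u k - K.apply (traj A B x₀ u k)) := by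
  induction N with
  | zero => simp [traj]
  | succ N ih =>
    rw [Finset.sum_range_succ, Finset.sum_range_succ, ih]
    have hkey := key_identity A B Q R hR P hP T hT heq K hK (traj A B x₀ u N) (u N)
    have hx1 : traj A B x₀ u (N+1) = A.apply (traj A B x₀ u N) + B.apply (u N) := rfl
    rw [← hx1] at hkey
    linarith

end Key

section Bounds
variable {N : ℕ}

lemma quad_lower_bound (f : (Fin N → ℂ) → ℝ) (hf : Continuous f)
    (hpos : ∀ x, x ≠ 0 → 0 < f x)
    (hhom : ∀ (c : ℝ) (x : Fin N → ℂ), f ((c : ℂ) • x) = c ^ 2 * f x) :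
    ∃ c > 0, ∀ x, c * ‖x‖ ^ 2 ≤ f x := by
  have hf0 : f 0 = 0 := by simpa using hhom 0 0
  rcases subsingleton_or_nontrivial (Fin N → ℂ) with hs | hs
  · refine ⟨1, one_pos, fun x => ?_⟩
    rw [Subsingleton.elim x 0]; simp [hf0]
  · obtain ⟨x₀, hx₀s, hmin⟩ := (isCompact_sphere (0 : Fin N → ℂ) 1).exists_isMinOn
      (NormedSpace.sphere_nonempty.mpr zero_le_one) hf.continuousOn
    have hx₀ : ‖x₀‖ = 1 := by simpa using hx₀s
    have hx₀0 : x₀ ≠ 0 := by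
      intro h; rw [h] at hx₀; simp at hx₀
    refine ⟨f x₀, hpos x₀ hx₀0, fun x => ?_⟩
    rcases eq_or_ne x 0 with rfl | hx
    · simp [hf0]
    · have hn : (0:ℝ) < ‖x‖ := norm_pos_iff.mpr hx
      set y : Fin N → ℂ := ((‖x‖⁻¹ : ℝ) : ℂ) • x with hy_def
      have hyn : ‖y‖ = 1 := by
        rw [hy_def, norm_smul]
        simp [abs_of_pos (inv_pos.mpr hn), inv_mul_cancel₀ hn.ne']
      have hys : y ∈ Metric.sphere (0 : Fin N → ℂ) 1 := by simp [hyn]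
      have hxy : f x = ‖x‖ ^ 2 * f y := by
        have hx' : ((‖x‖ : ℝ) : ℂ) • y = x := by
          rw [hy_def, smul_smul]
          norm_cast
          rw [mul_inv_cancel₀ hn.ne']
          simp
        calc f x = f (((‖x‖ : ℝ) : ℂ) • y) := by rw [hx']
          _ = ‖x‖ ^ 2 * f y := hhom _ _
      have hm : f x₀ ≤ f y := hmin hys
      rw [hxy]
      nlinarith [sq_nonneg ‖x‖]

lemma quad_upper_bound (f : (Fin N → ℂ) → ℝ) (hf : Continuous f)
    (hhom : ∀ (c : ℝ) (x : Fin N → ℂ), f ((c : ℂ) • x) = c ^ 2 * f x) :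
    ∃ C > 0, ∀ x, f x ≤ C * ‖x‖ ^ 2 := by
  have hf0 : f 0 = 0 := by simpa using hhom 0 0
  rcases subsingleton_or_nontrivial (Fin N → ℂ) with hs | hs
  · refine ⟨1, one_pos, fun x => ?_⟩
    rw [Subsingleton.elim x 0]; simp [hf0]
  · obtain ⟨x₀, hx₀s, hmax⟩ := (isCompact_sphere (0 : Fin N → ℂ) 1).exists_isMaxOn
      (NormedSpace.sphere_nonempty.mpr zero_le_one) hf.continuousOn
    refine ⟨max (f x₀) 1, lt_max_of_lt_right one_pos, fun x => ?_⟩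
    rcases eq_or_ne x 0 with rfl | hx
    · simp [hf0]
    · have hn : (0:ℝ) < ‖x‖ := norm_pos_iff.mpr hx
      set y : Fin N → ℂ := ((‖x‖⁻¹ : ℝ) : ℂ) • x with hy_def
      have hyn : ‖y‖ = 1 := by
        rw [hy_def, norm_smul]
        simp [abs_of_pos (inv_pos.mpr hn), inv_mul_cancel₀ hn.ne']
      have hys : y ∈ Metric.sphere (0 : Fin N → ℂ) 1 := by simp [hyn]
      have hxy : f x = ‖x‖ ^ 2 * f y := by
        have hx' : ((‖x‖ : ℝ) : ℂ) • y = x := by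
          rw [hy_def, smul_smul]
          norm_cast
          rw [mul_inv_cancel₀ hn.ne']
          simp
        calc f x = f (((‖x‖ : ℝ) : ℂ) • y) := by rw [hx']
          _ = ‖x‖ ^ 2 * f y := hhom _ _
      have hm : f y ≤ max (f x₀) 1 := le_trans (hmax hys) (le_max_left _ _)
      rw [hxy]
      nlinarith [sq_nonneg ‖x‖]

end Bounds

end Aux

/-- If `{P₁,P₂} > 0` solves the bimatrix Riccati equation with
`{S₁,S₂}⁻¹ = T`, and `{K₁*,K₂*} = -{S}⁻¹{B}^H{P}{A}`, then the closed-loop system is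
asymptotically stable, the cost of any control is at least
`Re(x₀^H P₁ x₀ + x₀^H P₂^# x₀^#)`, and the feedback control `u* = {K*} x` attains it. -/
theorem riccati_posDef_optimal
    (A : Bimatrix n n) (B : Bimatrix n m)
    (Q : Matrix (Fin n) (Fin n) ℂ) (R : Matrix (Fin m) (Fin m) ℂ)
    (hQ : Q.PosDef) (hR : R.PosDef)
    (P : Bimatrix n n) (hP : P.PosDef)
    (T : Bimatrix m m) (hT : (Smat B R P).IsInv T)
    (heq : (Bimatrix.mk Q 0).neg =
      ((A.conjT.mul (P.mul A)).sub P).sub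
        (A.conjT.mul (P.mul (B.mul (T.mul (B.conjT.mul (P.mul A)))))))
    (K : Bimatrix m n) (hK : K = (T.mul (B.conjT.mul (P.mul A))).neg) :
    (∀ x : ℕ → Fin n → ℂ,
        (∀ k : ℕ, x (k + 1) = (A.add (B.mul K)).apply (x k)) →
        Tendsto x atTop (𝓝 0)) ∧
    ∀ x₀ : Fin n → ℂ,
      (∀ u : ℕ → Fin m → ℂ,
          ENNReal.ofReal (P.quadForm x₀) ≤ cost Q R (traj A B x₀ u) u) ∧
      (∀ u : ℕ → Fin m → ℂ, (∀ k : ℕ, u k = K.apply (traj A B x₀ u k)) →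
          cost Q R (traj A B x₀ u) u = ENNReal.ofReal (P.quadForm x₀)) := by
  have hRH : Rᴴ = R := hR.1
  have key := key_identity A B Q R hRH P hP.1 T hT heq K hK
  -- nonnegativity of the quadratic stage costs
  have hQnn : ∀ x : Fin n → ℂ, 0 ≤ (star x ⬝ᵥ Q *ᵥ x).re := by
    intro x
    rcases eq_or_ne x 0 with rfl | hx
    · simp
    · have h := hQ.dotProduct_mulVec_pos hx
      have := (Complex.lt_def.mp h).1
      simpa using this.le
  have hQpos : ∀ x : Fin n → ℂ, x ≠ 0 → 0 < (star x ⬝ᵥ Q *ᵥ x).re := by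
    intro x hx
    have h := hQ.dotProduct_mulVec_pos hx
    have := (Complex.lt_def.mp h).1
    simpa using this
  have hRnn : ∀ v : Fin m → ℂ, 0 ≤ (star v ⬝ᵥ R *ᵥ v).re := by
    intro v
    rcases eq_or_ne v 0 with rfl | hv
    · simp
    · have h := hR.dotProduct_mulVec_pos hv
      have := (Complex.lt_def.mp h).1
      simpa using this.le
  have hSnn : ∀ v : Fin m → ℂ, 0 ≤ (Smat B R P).quadForm v := by
    intro v
    have h : (Smat B R P).quadForm v
        = (star v ⬝ᵥ R *ᵥ v).re + P.quadForm (B.apply v) := by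
      unfold Smat
      rw [quadForm_add', quadForm_mk, quadForm_conj_mul]
    rw [h]
    exact add_nonneg (hRnn v) (hP.2.1 _)
  -- quadratic bounds
  obtain ⟨cQ, hcQpos, hcQle'⟩ := quad_lower_bound (Bimatrix.mk Q 0).quadForm
    (continuous_quadForm _) (fun x hx => by rw [quadForm_mk]; exact hQpos x hx)
    (quadForm_smul _)
  have hcQle : ∀ x : Fin n → ℂ, cQ * ‖x‖ ^ 2 ≤ (star x ⬝ᵥ Q *ᵥ x).re := by
    intro x
    have h := hcQle' x
    rwa [quadForm_mk] at h
  obtain ⟨cP, hcPpos, hcPle⟩ := quad_lower_bound P.quadForm (continuous_quadForm P)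
    hP.2.2 (quadForm_smul P)
  obtain ⟨CP, hCPpos, hCPle⟩ := quad_upper_bound P.quadForm (continuous_quadForm P)
    (quadForm_smul P)
  -- stability of the closed loop
  have hstab : ∀ x : ℕ → Fin n → ℂ,
      (∀ k : ℕ, x (k + 1) = (A.add (B.mul K)).apply (x k)) →
      Tendsto x atTop (𝓝 0) := by
    intro x hx
    set V : ℕ → ℝ := fun k => P.quadForm (x k) with hV
    have hVnn : ∀ k, 0 ≤ V k := fun k => hP.2.1 _
    have hstep : ∀ k, V (k+1) ≤ V k - cQ * ‖x k‖ ^ 2 := by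
      intro k
      have hx' : x (k+1) = A.apply (x k) + B.apply (K.apply (x k)) := by
        rw [hx k, Bimatrix.add_apply', Bimatrix.mul_apply']
      have hkey := key (x k) (K.apply (x k))
      rw [← hx'] at hkey
      rw [sub_self, quadForm_vzero] at hkey
      have h1 := hcQle (x k)
      have h2 := hRnn (K.apply (x k))
      simp only [hV]
      linarith
    set r : ℝ := max (1 - cQ / CP) 0 with hr
    have hr0 : 0 ≤ r := le_max_right _ _
    have hr1 : r < 1 := by
      apply max_lt _ one_pos
      have : 0 < cQ / CP := div_pos hcQpos hCPpos
      linarith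
    have hgeo : ∀ k, V (k+1) ≤ r * V k := by
      intro k
      have h1 := hstep k
      have h2 := hCPle (x k)
      have h3 : (1 - cQ / CP) * V k ≤ r * V k :=
        mul_le_mul_of_nonneg_right (le_max_left _ _) (hVnn k)
      have h4 : (cQ / CP) * V k ≤ cQ * ‖x k‖ ^ 2 := by
        rw [div_mul_eq_mul_div, div_le_iff₀ hCPpos]
        nlinarith
      linarith
    have hVle : ∀ k, V k ≤ r ^ k * V 0 := by
      intro k
      induction k with
      | zero => simp
      | succ k ih =>
        calc V (k+1) ≤ r * V k := hgeo k
          _ ≤ r * (r ^ k * V 0) := mul_le_mul_of_nonneg_left ih hr0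
          _ = r ^ (k+1) * V 0 := by ring
    have hV0 : Tendsto V atTop (𝓝 0) := by
      apply squeeze_zero hVnn hVle
      have := (tendsto_pow_atTop_nhds_zero_of_lt_one hr0 hr1).mul_const (V 0)
      simpa using this
    have hb : ∀ k, ‖x k‖ ≤ Real.sqrt (V k / cP) := by
      intro k
      have h1 := hcPle (x k)
      have h2 : ‖x k‖ ^ 2 ≤ V k / cP := by
        rw [le_div_iff₀ hcPpos]
        nlinarith
      calc ‖x k‖ = Real.sqrt (‖x k‖ ^ 2) := (Real.sqrt_sq (norm_nonneg _)).symm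
        _ ≤ Real.sqrt (V k / cP) := Real.sqrt_le_sqrt h2
    rw [tendsto_zero_iff_norm_tendsto_zero]
    apply squeeze_zero (fun k => norm_nonneg _) hb
    have h5 : Tendsto (fun k => V k / cP) atTop (𝓝 0) := by
      simpa using hV0.div_const cP
    have h6 := (Real.continuous_sqrt.tendsto 0).comp h5
    simpa [Function.comp_def] using h6
  refine ⟨hstab, fun x₀ => ?_⟩
  have hmain : ∀ u : ℕ → Fin m → ℂ,
      ENNReal.ofReal (P.quadForm x₀) ≤ cost Q R (traj A B x₀ u) u := by
    intro u
    set x : ℕ → Fin n → ℂ := traj A B x₀ u with hx_def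
    set s : ℕ → ℝ := fun k =>
      (star (x k) ⬝ᵥ Q *ᵥ x k).re + (star (u k) ⬝ᵥ R *ᵥ u k).re with hs_def
    have hsnn : ∀ k, 0 ≤ s k := fun k => add_nonneg (hQnn _) (hRnn _)
    have hcost : cost Q R x u = ∑' k, ENNReal.ofReal (s k) := rfl
    have htel := traj_telescope A B Q R hRH P hP.1 T hT heq K hK x₀ u
    by_cases hinf : cost Q R x u = ⊤
    · rw [hinf]; exact le_top
    · have hterm : Tendsto (fun k => ENNReal.ofReal (s k)) atTop (𝓝 0) := by
        apply ENNReal.tendsto_atTop_zero_of_tsum_ne_top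
        rw [← hcost]; exact hinf
      have hs0 : Tendsto s atTop (𝓝 0) := by
        have h2 := (ENNReal.tendsto_toReal (by simp)).comp hterm
        simp only [Function.comp_def, ENNReal.toReal_zero] at h2
        exact h2.congr fun k => ENNReal.toReal_ofReal (hsnn k)
      have hxk0 : Tendsto (fun N => P.quadForm (x N)) atTop (𝓝 0) := by
        have hxb : ∀ k, ‖x k‖ ≤ Real.sqrt (s k / cQ) := by
          intro k
          have h1 := hcQle (x k)
          have h2 := hRnn (u k)
          have h3 : ‖x k‖ ^ 2 ≤ s k / cQ := by
            rw [le_div_iff₀ hcQpos]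
            simp only [hs_def]
            nlinarith
          calc ‖x k‖ = Real.sqrt (‖x k‖ ^ 2) := (Real.sqrt_sq (norm_nonneg _)).symm
            _ ≤ Real.sqrt (s k / cQ) := Real.sqrt_le_sqrt h3
        have hxk : Tendsto x atTop (𝓝 0) := by
          rw [tendsto_zero_iff_norm_tendsto_zero]
          apply squeeze_zero (fun k => norm_nonneg _) hxb
          have h3 : Tendsto (fun k => s k / cQ) atTop (𝓝 0) := by
            simpa using hs0.div_const cQ
          simpa [Function.comp_def] using (Real.continuous_sqrt.tendsto 0).comp h3
        have := ((continuous_quadForm P).tendsto 0).comp hxk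
        simpa [Function.comp_def] using this
      have hub : ∀ N, ENNReal.ofReal (P.quadForm x₀ - P.quadForm (x N))
          ≤ cost Q R x u := by
        intro N
        have h1 : P.quadForm x₀ - P.quadForm (x N) ≤ ∑ k ∈ Finset.range N, s k := by
          have h2 := htel N
          have h3 : 0 ≤ ∑ k ∈ Finset.range N,
              (Smat B R P).quadForm (u k - K.apply (traj A B x₀ u k)) :=
            Finset.sum_nonneg fun i _ => hSnn _
          simp only [hs_def]
          rw [← hx_def] at h2
          linarith
        calc ENNReal.ofReal (P.quadForm x₀ - P.quadForm (x N))
            ≤ ENNReal.ofReal (∑ k ∈ Finset.range N, s k) := ENNReal.ofReal_le_ofReal h1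
          _ = ∑ k ∈ Finset.range N, ENNReal.ofReal (s k) :=
              ENNReal.ofReal_sum_of_nonneg fun i _ => hsnn i
          _ ≤ ∑' k, ENNReal.ofReal (s k) := ENNReal.sum_le_tsum _
          _ = cost Q R x u := hcost.symm
      have hlim : Tendsto (fun N => ENNReal.ofReal (P.quadForm x₀ - P.quadForm (x N)))
          atTop (𝓝 (ENNReal.ofReal (P.quadForm x₀))) := by
        have h4 : Tendsto (fun N => P.quadForm x₀ - P.quadForm (x N)) atTop
            (𝓝 (P.quadForm x₀)) := by
          simpa using tendsto_const_nhds.sub hxk0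
        exact (ENNReal.continuous_ofReal.tendsto _).comp h4
      exact le_of_tendsto hlim (Filter.Eventually.of_forall hub)
  refine ⟨hmain, fun u hu => ?_⟩
  set x : ℕ → Fin n → ℂ := traj A B x₀ u with hx_def
  set s : ℕ → ℝ := fun k =>
    (star (x k) ⬝ᵥ Q *ᵥ x k).re + (star (u k) ⬝ᵥ R *ᵥ u k).re with hs_def
  have hsnn : ∀ k, 0 ≤ s k := fun k => add_nonneg (hQnn _) (hRnn _)
  have hcost : cost Q R x u = ∑' k, ENNReal.ofReal (s k) := rfl
  have htel := traj_telescope A B Q R hRH P hP.1 T hT heq K hK x₀ u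
  have hx' : ∀ k, x (k+1) = (A.add (B.mul K)).apply (x k) := by
    intro k
    have h1 : x (k+1) = A.apply (x k) + B.apply (u k) := rfl
    rw [h1, hu k, Bimatrix.add_apply', Bimatrix.mul_apply']
  have hxk := hstab x hx'
  have hV0 : Tendsto (fun N => P.quadForm (x N)) atTop (𝓝 0) := by
    have := ((continuous_quadForm P).tendsto 0).comp hxk
    simpa [Function.comp_def] using this
  have htel' : ∀ N, ∑ k ∈ Finset.range N, s k
      = P.quadForm x₀ - P.quadForm (x N) := by
    intro N
    have h2 := htel N
    rw [← hx_def] at h2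
    have h3 : ∑ k ∈ Finset.range N,
        (Smat B R P).quadForm (u k - K.apply (x k)) = 0 :=
      Finset.sum_eq_zero fun i _ => by rw [hu i, sub_self, quadForm_vzero]
    rw [h3] at h2
    simp only [hs_def]
    linarith
  apply le_antisymm _ (hmain u)
  rw [hcost, ENNReal.tsum_eq_iSup_sum]
  apply iSup_le
  intro F
  obtain ⟨N, hFN⟩ := F.exists_nat_subset_range
  calc ∑ k ∈ F, ENNReal.ofReal (s k)
      ≤ ∑ k ∈ Finset.range N, ENNReal.ofReal (s k) :=
        Finset.sum_le_sum_of_subset hFN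
    _ = ENNReal.ofReal (∑ k ∈ Finset.range N, s k) :=
        (ENNReal.ofReal_sum_of_nonneg fun i _ => hsnn i).symm
    _ = ENNReal.ofReal (P.quadForm x₀ - P.quadForm (x N)) := by rw [htel' N]
    _ ≤ ENNReal.ofReal (P.quadForm x₀) := by
        apply ENNReal.ofReal_le_ofReal
        have := hP.2.1 (x N)
        linarith
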